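/- arXiv:2012.02222 — 3 statements merged into one kernel-verified Lean document; each statement's English description precedes it below -/
import Mathlib

section
/- For any matrix X ∈ Matrix n n ℂ and any finite family of pairwise orthogonal projections Π⁽ᵏ⁾ (i.e. each Π⁽ᵏ⁾ is self-adjoint idempotent and Π⁽ʲ⁾Π⁽ᵏ⁾ = 0 for j ≠ k, with Σₖ Π⁽ᵏ⁾ ≤ 1), the pinching inequality holds for the trace norm: ‖Σₖ Π⁽ᵏ⁾ X Π⁽ᵏ⁾‖₁ ≤ ‖X‖₁. Moreover, ‖Σₖ Π⁽ᵏ⁾ X Π⁽ᵏ⁾‖₁ = Σₖ ‖Π⁽ᵏ⁾ X Π⁽ᵏ⁾‖₁. -/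
open Matrix
open scoped ComplexOrder Kronecker

/-- The trace norm of a complex square matrix: `Tr √(X Xᴴ)`. -/
noncomputable def traceNorm {n : Type*} [Fintype n] [DecidableEq n]
    (X : Matrix n n ℂ) : ℝ :=
  (((Matrix.posSemidef_self_mul_conjTranspose X).1.eigenvectorUnitary : Matrix n n ℂ) *
    diagonal (((↑) : ℝ → ℂ) ∘ Real.sqrt ∘ (Matrix.posSemidef_self_mul_conjTranspose X).1.eigenvalues) *
    (star (Matrix.posSemidef_self_mul_conjTranspose X).1.eigenvectorUnitary : Matrix n n ℂ)).trace.re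

/-- A density matrix: positive semidefinite with unit trace. -/
def IsDensityMatrix {n : Type*} [Fintype n] [DecidableEq n]
    (ρ : Matrix n n ℂ) : Prop :=
  ρ.PosSemidef ∧ ρ.trace = 1

/-- The square root of a positive semidefinite matrix, via the spectral theorem. -/
noncomputable def Matrix.PosSemidef.sqrt {n : Type*} [Fintype n] [DecidableEq n]
    {A : Matrix n n ℂ} (hA : A.PosSemidef) : Matrix n n ℂ :=
  (hA.1.eigenvectorUnitary : Matrix n n ℂ) *
    diagonal (((↑) : ℝ → ℂ) ∘ Real.sqrt ∘ hA.1.eigenvalues) *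
    (star hA.1.eigenvectorUnitary : Matrix n n ℂ)

open scoped MatrixOrder in
lemma Matrix.PosSemidef.sqrt_eq_cfc {n : Type*} [Fintype n] [DecidableEq n]
    {A : Matrix n n ℂ} (hA : A.PosSemidef) : hA.sqrt = CFC.sqrt A := by
  rw [CFC.sqrt_eq_real_sqrt A hA.nonneg, cfcₙ_eq_cfc, hA.1.cfc_eq Real.sqrt, IsHermitian.cfc,
    Unitary.conjStarAlgAut_apply]
  rfl

open scoped MatrixOrder in
lemma Matrix.PosSemidef.posSemidef_sqrt {n : Type*} [Fintype n] [DecidableEq n]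
    {A : Matrix n n ℂ} (hA : A.PosSemidef) : hA.sqrt.PosSemidef := by
  rw [hA.sqrt_eq_cfc]
  exact (CFC.sqrt_nonneg A).posSemidef

open scoped MatrixOrder in
lemma Matrix.PosSemidef.sqrt_mul_self {n : Type*} [Fintype n] [DecidableEq n]
    {A : Matrix n n ℂ} (hA : A.PosSemidef) : hA.sqrt * hA.sqrt = A := by
  rw [hA.sqrt_eq_cfc]
  exact CFC.sqrt_mul_sqrt_self A hA.nonneg

open scoped MatrixOrder in
lemma Matrix.PosSemidef.eq_sqrt_of_sq_eq {n : Type*} [Fintype n] [DecidableEq n]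
    {S A : Matrix n n ℂ} (hS : S.PosSemidef) (hA : A.PosSemidef) (h : S ^ 2 = A) :
    S = hA.sqrt := by
  rw [hA.sqrt_eq_cfc, eq_comm]
  exact CFC.sqrt_unique (by rw [← h, sq]) hS.nonneg

namespace TraceNormAux

set_option linter.unusedSectionVars false
set_option maxHeartbeats 1600000

/-! ### Sign machinery -/

def sgn (b : Bool) : ℂ := if b then 1 else -1

lemma sgn_mul_self (b : Bool) : sgn b * sgn b = 1 := by cases b <;> simp [sgn]
lemma star_sgn (b : Bool) : star (sgn b) = sgn b := by cases b <;> simp [sgn]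
lemma sgn_not (b : Bool) : sgn (!b) = - sgn b := by cases b <;> simp [sgn]

lemma sum_sgn_mul {κ : Type*} [Fintype κ] [DecidableEq κ] {j k : κ} (hjk : j ≠ k) :
    ∑ ε : κ → Bool, sgn (ε j) * sgn (ε k) = 0 := by
  apply Finset.sum_ninvolution (g := fun ε => Function.update ε j (!ε j))
  · intro ε
    rw [Function.update_self, Function.update_of_ne (Ne.symm hjk), sgn_not]
    ring
  · intro ε _ heq
    have := congrFun heq j
    rw [Function.update_self] at this
    simp at this
  · intro ε; exact Finset.mem_univ _
  · intro ε
    funext x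
    by_cases hx : x = j
    · subst hx; simp [Function.update_self]
    · simp [Function.update_of_ne hx]

lemma sum_sgn_sq {κ : Type*} [Fintype κ] [DecidableEq κ] (j : κ) :
    ∑ ε : κ → Bool, sgn (ε j) * sgn (ε j) = ((2:ℂ) ^ Fintype.card κ) := by
  simp only [sgn_mul_self, Finset.sum_const, Finset.card_univ, nsmul_eq_mul, mul_one]
  rw [Fintype.card_fun]
  push_cast
  simp

variable {n : Type*} [Fintype n] [DecidableEq n]

/-! ### Basic facts about `traceNorm` -/

lemma sqrt_unique {A S : Matrix n n ℂ} (hA : A.PosSemidef) (hS : S.PosSemidef)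
    (h : S * S = A) : hA.sqrt = S :=
  (hS.eq_sqrt_of_sq_eq hA (by rw [pow_two, h])).symm

lemma traceNorm_eq_re_trace {X S : Matrix n n ℂ}
    (hS : S.PosSemidef) (h : S * S = X * Xᴴ) :
    traceNorm X = S.trace.re := by
  rw [show traceNorm X = (posSemidef_self_mul_conjTranspose X).sqrt.trace.re from rfl,
    sqrt_unique (posSemidef_self_mul_conjTranspose X) hS h]

lemma eq_zero_of_trace_conjTranspose_mul_self {M : Matrix n n ℂ}
    (h : (Mᴴ * M).trace = 0) : M = 0 := by
  have h' : ∑ j, ∑ i, Complex.normSq (M i j) = 0 := by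
    have := congrArg Complex.re h
    simpa [Matrix.trace, Matrix.diag, Matrix.mul_apply, Complex.re_sum,
      Matrix.conjTranspose_apply, Complex.normSq_eq_conj_mul_self, Complex.normSq_apply] using this
  ext i j
  have hj : ∀ j' ∈ Finset.univ, (0:ℝ) ≤ ∑ i, Complex.normSq (M i j') :=
    fun j' _ => Finset.sum_nonneg fun i _ => Complex.normSq_nonneg _
  have h2 : ∑ i, Complex.normSq (M i j) = 0 :=
    le_antisymm (by
      have := (Finset.sum_eq_zero_iff_of_nonneg hj).mp h' j (Finset.mem_univ _)
      exact this.le) (Finset.sum_nonneg fun i _ => Complex.normSq_nonneg _)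
  have h3 := (Finset.sum_eq_zero_iff_of_nonneg
    (fun i _ => Complex.normSq_nonneg (M i j))).mp h2 i (Finset.mem_univ _)
  simpa using Complex.normSq_eq_zero.mp h3

lemma sqrt_mul_sqrt_eq_zero {A B : Matrix n n ℂ} (hA : A.PosSemidef) (hB : B.PosSemidef)
    (h : A * B = 0) : hA.sqrt * hB.sqrt = 0 := by
  apply eq_zero_of_trace_conjTranspose_mul_self
  have hMt : (hA.sqrt * hB.sqrt)ᴴ * (hA.sqrt * hB.sqrt) = hB.sqrt * (A * hB.sqrt) := by
    rw [conjTranspose_mul, hA.posSemidef_sqrt.1.eq, hB.posSemidef_sqrt.1.eq,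
      Matrix.mul_assoc, ← Matrix.mul_assoc hA.sqrt, hA.sqrt_mul_self]
  rw [hMt, trace_mul_comm, Matrix.mul_assoc, hB.sqrt_mul_self, h, trace_zero]

lemma posSemidef_sum {ι : Type*} (s : Finset ι) (f : ι → Matrix n n ℂ)
    (h : ∀ i ∈ s, (f i).PosSemidef) : (∑ i ∈ s, f i).PosSemidef :=
  Finset.sum_induction f _ (fun _ _ ha hb => ha.add hb) .zero h

lemma diag_double_sum {ι : Type*} [Fintype ι] (f : ι → ι → Matrix n n ℂ)
    (h : ∀ j k, j ≠ k → f j k = 0) : ∑ j, ∑ k, f j k = ∑ j, f j j :=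
  Finset.sum_congr rfl fun j _ =>
    Finset.sum_eq_single j (fun k _ hk => h j k (Ne.symm hk)) (by simp)

/-- **Additivity of the trace norm on orthogonal blocks.** -/
lemma traceNorm_sum_orth {ι : Type*} [Fintype ι] (B : ι → Matrix n n ℂ)
    (h1 : ∀ j k, j ≠ k → B j * (B k)ᴴ = 0)
    (h2 : ∀ j k, j ≠ k → (B j)ᴴ * B k = 0) :
    traceNorm (∑ k, B k) = ∑ k, traceNorm (B k) := by
  have hA : ∀ k : ι, (B k * (B k)ᴴ).PosSemidef := fun k =>
    posSemidef_self_mul_conjTranspose _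
  have hSpsd : (∑ k, (hA k).sqrt).PosSemidef :=
    posSemidef_sum _ _ (fun i _ => (hA i).posSemidef_sqrt)
  have hcross : ∀ j k, j ≠ k → (hA j).sqrt * (hA k).sqrt = 0 := by
    intro j k hjk
    apply sqrt_mul_sqrt_eq_zero
    calc B j * (B j)ᴴ * (B k * (B k)ᴴ)
        = B j * ((B j)ᴴ * B k) * (B k)ᴴ := by
          simp only [Matrix.mul_assoc]
      _ = 0 := by rw [h2 j k hjk, mul_zero, zero_mul]
  have hSS : (∑ k, (hA k).sqrt) * (∑ k, (hA k).sqrt) = (∑ k, B k) * (∑ k, B k)ᴴ := by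
    rw [Finset.sum_mul_sum, conjTranspose_sum, Finset.sum_mul_sum]
    rw [diag_double_sum _ hcross, diag_double_sum _ (fun j k hjk => h1 j k hjk)]
    exact Finset.sum_congr rfl fun k _ => (hA k).sqrt_mul_self
  rw [traceNorm_eq_re_trace hSpsd hSS, trace_sum, Complex.re_sum]
  exact Finset.sum_congr rfl fun k _ =>
    (traceNorm_eq_re_trace (hA k).posSemidef_sqrt (hA k).sqrt_mul_self).symm

/-! ### Spectral data -/

lemma exists_spectral (X : Matrix n n ℂ) :
    ∃ (V : Matrix n n ℂ) (d : n → ℝ), (∀ i, 0 ≤ d i) ∧ V * Vᴴ = 1 ∧ Vᴴ * V = 1 ∧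
      X * Xᴴ = V * diagonal ((↑) ∘ d) * Vᴴ := by
  have h := posSemidef_self_mul_conjTranspose X
  refine ⟨(h.1.eigenvectorUnitary : Matrix n n ℂ), h.1.eigenvalues,
    fun i => h.eigenvalues_nonneg i, ?_, ?_, ?_⟩
  · have := Matrix.mem_unitaryGroup_iff.mp h.1.eigenvectorUnitary.2
    rwa [Matrix.star_eq_conjTranspose] at this
  · have := Matrix.mem_unitaryGroup_iff'.mp h.1.eigenvectorUnitary.2
    rwa [Matrix.star_eq_conjTranspose] at this
  · have := h.1.spectral_theorem
    rwa [Unitary.conjStarAlgAut_apply, Matrix.star_eq_conjTranspose] at this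

lemma conj_mul_conj {V : Matrix n n ℂ} (hV2 : Vᴴ * V = 1) (E F : Matrix n n ℂ) :
    (V * E * Vᴴ) * (V * F * Vᴴ) = V * (E * F) * Vᴴ := by
  simp only [Matrix.mul_assoc]
  rw [← Matrix.mul_assoc Vᴴ V (F * Vᴴ), hV2, one_mul]

lemma traceNorm_eq_of_spectral {X V : Matrix n n ℂ} {d : n → ℝ} (hd : ∀ i, 0 ≤ d i)
    (hV2 : Vᴴ * V = 1)
    (hXV : X * Xᴴ = V * diagonal ((↑) ∘ d) * Vᴴ) :
    traceNorm X = ∑ i, Real.sqrt (d i) := by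
  set D : Matrix n n ℂ := diagonal ((↑) ∘ Real.sqrt ∘ d) with hD
  have hDpsd : D.PosSemidef := by
    refine posSemidef_diagonal_iff.mpr fun i => ?_
    simpa using Complex.zero_le_real.mpr (Real.sqrt_nonneg _)
  have hS : (V * D * Vᴴ).PosSemidef := hDpsd.mul_mul_conjTranspose_same V
  have hDD : D * D = diagonal ((↑) ∘ d) := by
    rw [hD, diagonal_mul_diagonal]
    refine congrArg diagonal (funext fun i => ?_)
    simp [Function.comp, ← Complex.ofReal_mul, Real.mul_self_sqrt (hd i)]
  have hsq : (V * D * Vᴴ) * (V * D * Vᴴ) = X * Xᴴ := by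
    rw [conj_mul_conj hV2, hDD, hXV]
  rw [traceNorm_eq_re_trace hS hsq, trace_mul_cycle, hV2, one_mul, trace_diagonal]
  simp [Complex.re_sum]

lemma traceNorm_nonneg (X : Matrix n n ℂ) : 0 ≤ traceNorm X := by
  obtain ⟨V, d, hd, hV1, hV2, hXV⟩ := exists_spectral X
  rw [traceNorm_eq_of_spectral hd hV2 hXV]
  exact Finset.sum_nonneg fun i _ => Real.sqrt_nonneg _

lemma traceNorm_zero : traceNorm (0 : Matrix n n ℂ) = 0 := by
  rw [traceNorm_eq_re_trace Matrix.PosSemidef.zero (by simp), trace_zero]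
  simp

lemma psd_diag_re_nonneg {M : Matrix n n ℂ} (hM : M.PosSemidef) (i : n) :
    0 ≤ (M i i).re := by
  have h := hM.dotProduct_mulVec_nonneg (Pi.single i 1)
  have he : star (Pi.single i 1 : n → ℂ) ⬝ᵥ (M *ᵥ Pi.single i 1) = M i i := by
    simp [dotProduct, Matrix.mulVec, Pi.single_apply, Finset.mul_sum]
  rw [he] at h
  simpa using (Complex.le_def.mp h).1

/-! ### The trace norm via contractions -/

lemma exists_contraction (X : Matrix n n ℂ) :
    ∃ W : Matrix n n ℂ, (1 - Wᴴ * W).PosSemidef ∧ ((W * X).trace).re = traceNorm X := by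
  obtain ⟨V, d, hd, hV1, hV2, hXV⟩ := exists_spectral X
  set g : n → ℂ := fun i => (((Real.sqrt (d i))⁻¹ : ℝ) : ℂ) with hg
  set G : Matrix n n ℂ := diagonal g with hG
  set M : Matrix n n ℂ := V * G * Vᴴ with hM
  have hGH : Gᴴ = G := by
    rw [hG, diagonal_conjTranspose]
    refine congrArg diagonal (funext fun i => ?_)
    simp [hg, Complex.conj_ofReal]
  have hMH : Mᴴ = M := by
    rw [hM]
    simp only [conjTranspose_mul, conjTranspose_conjTranspose, hGH, Matrix.mul_assoc]
  refine ⟨Xᴴ * M, ?_, ?_⟩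
  · have hWW : (Xᴴ * M)ᴴ * (Xᴴ * M) = M * (X * Xᴴ) * M := by
      rw [conjTranspose_mul, conjTranspose_conjTranspose, hMH]
      simp only [Matrix.mul_assoc]
    have hGDG : G * diagonal ((↑) ∘ d) * G = diagonal (fun i => if d i = 0 then (0:ℂ) else 1) := by
      rw [hG, diagonal_mul_diagonal, diagonal_mul_diagonal]
      refine congrArg diagonal (funext fun i => ?_)
      by_cases h0 : d i = 0
      · simp [hg, h0]
      · have hpos : 0 < d i := lt_of_le_of_ne (hd i) (Ne.symm h0)
        have hs : Real.sqrt (d i) ≠ 0 := ne_of_gt (Real.sqrt_pos.mpr hpos)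
        rw [if_neg h0]
        simp only [hg, Pi.mul_apply, Function.comp_apply]
        rw [← Complex.ofReal_mul, ← Complex.ofReal_mul]
        norm_cast
        field_simp
        rw [Real.sq_sqrt (hd i)]
    have hconj : M * (X * Xᴴ) * M = V * (G * diagonal ((↑) ∘ d) * G) * Vᴴ := by
      rw [hM, hXV, conj_mul_conj hV2, conj_mul_conj hV2]
    have key : 1 - (Xᴴ * M)ᴴ * (Xᴴ * M)
        = V * diagonal (fun i => if d i = 0 then (1:ℂ) else 0) * Vᴴ := by
      rw [hWW, hconj, hGDG]
      have h1 : (1 : Matrix n n ℂ) = V * 1 * Vᴴ := by rw [Matrix.mul_one, hV1]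
      rw [h1]
      rw [← Matrix.sub_mul, ← Matrix.mul_sub]
      congr 2
      rw [← diagonal_one, diagonal_sub]
      refine congrArg diagonal (funext fun i => ?_)
      by_cases h0 : d i = 0 <;> simp [h0]
    rw [key]
    refine PosSemidef.mul_mul_conjTranspose_same ?_ V
    refine posSemidef_diagonal_iff.mpr fun i => ?_
    by_cases h0 : d i = 0 <;> simp [h0]
  · rw [trace_mul_comm, ← Matrix.mul_assoc X Xᴴ M, hXV, hM, conj_mul_conj hV2,
      trace_mul_cycle, hV2, one_mul, hG, diagonal_mul_diagonal, trace_diagonal]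
    rw [traceNorm_eq_of_spectral hd hV2 hXV, Complex.re_sum]
    refine Finset.sum_congr rfl fun i _ => ?_
    simp only [Pi.mul_apply, Function.comp_apply]
    rw [← Complex.ofReal_mul, ← div_eq_mul_inv, Real.div_sqrt, Complex.ofReal_re]

lemma abs_sum_mul_le (a b : n → ℂ) :
    ‖∑ j, a j * b j‖ ≤ Real.sqrt (∑ j, ‖a j‖ ^ 2) * Real.sqrt (∑ j, ‖b j‖ ^ 2) := by
  have key := norm_inner_le_norm (𝕜 := ℂ)
    (x := (WithLp.equiv 2 (n → ℂ)).symm (fun j => star (a j)))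
    (y := (WithLp.equiv 2 (n → ℂ)).symm b)
  rw [EuclideanSpace.norm_eq, EuclideanSpace.norm_eq] at key
  simpa [PiLp.inner_apply, RCLike.inner_apply, PiLp.toLp_apply,
    Complex.star_def, Complex.conj_conj, mul_comm] using key

lemma re_trace_mul_le (W : Matrix n n ℂ) (hW : (1 - Wᴴ * W).PosSemidef) (X : Matrix n n ℂ) :
    ((W * X).trace).re ≤ traceNorm X := by
  obtain ⟨V, d, hd, hV1, hV2, hXV⟩ := exists_spectral X
  set R := Vᴴ * X with hR
  set C := W * V with hC
  have htr : (R * C).trace = (W * X).trace := by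
    rw [hR, hC, trace_mul_comm (Vᴴ * X) (W * V), Matrix.mul_assoc W V (Vᴴ * X),
      ← Matrix.mul_assoc V Vᴴ X, hV1, one_mul]
  have hRR : R * Rᴴ = diagonal ((↑) ∘ d) := by
    rw [hR, conjTranspose_mul, conjTranspose_conjTranspose,
      Matrix.mul_assoc, ← Matrix.mul_assoc X Xᴴ V, ← Matrix.mul_assoc Vᴴ (X * Xᴴ) V, hXV]
    simp only [Matrix.mul_assoc]
    rw [hV2, Matrix.mul_one, ← Matrix.mul_assoc Vᴴ V _, hV2, one_mul]
  have hrow : ∀ i, ∑ j, ‖R i j‖ ^ 2 = d i := by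
    intro i
    have h1 : (R * Rᴴ) i i = ((d i : ℝ) : ℂ) := by rw [hRR]; simp
    have h2 : (R * Rᴴ) i i = ((∑ j, ‖R i j‖ ^ 2 : ℝ) : ℂ) := by
      rw [Matrix.mul_apply, Complex.ofReal_sum]
      refine Finset.sum_congr rfl fun j _ => ?_
      rw [conjTranspose_apply, Complex.star_def, Complex.mul_conj]
      norm_cast
      rw [Complex.normSq_eq_norm_sq]
    have h3 := h1.symm.trans h2
    exact_mod_cast h3.symm
  have hcol : ∀ i, ∑ j, ‖C j i‖ ^ 2 ≤ 1 := by
    intro i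
    have hpsd : (Vᴴ * (1 - Wᴴ * W) * V).PosSemidef := hW.conjTranspose_mul_mul_same V
    have hCC : Cᴴ * C = 1 - Vᴴ * (1 - Wᴴ * W) * V := by
      rw [hC, conjTranspose_mul]
      rw [Matrix.mul_sub, Matrix.sub_mul, Matrix.mul_one, hV2]
      rw [sub_sub_cancel]
      simp only [Matrix.mul_assoc]
    have h2 : (Cᴴ * C) i i = ((∑ j, ‖C j i‖ ^ 2 : ℝ) : ℂ) := by
      rw [Matrix.mul_apply, Complex.ofReal_sum]
      refine Finset.sum_congr rfl fun j _ => ?_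
      rw [conjTranspose_apply, Complex.star_def, mul_comm, Complex.mul_conj]
      norm_cast
      rw [Complex.normSq_eq_norm_sq]
    have h4 : ((∑ j, ‖C j i‖ ^ 2 : ℝ) : ℂ) = 1 - (Vᴴ * (1 - Wᴴ * W) * V) i i := by
      rw [← h2, hCC]
      simp [Matrix.sub_apply, Matrix.one_apply]
    have h5 := congrArg Complex.re h4
    rw [Complex.ofReal_re, Complex.sub_re, Complex.one_re] at h5
    have h6 := psd_diag_re_nonneg hpsd i
    linarith
  calc ((W * X).trace).re = ((R * C).trace).re := by rw [htr]
    _ ≤ ∑ i, ‖(R * C) i i‖ := by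
        rw [Matrix.trace, Complex.re_sum]
        refine Finset.sum_le_sum fun i _ => ?_
        exact Complex.re_le_norm _
    _ ≤ ∑ i, Real.sqrt (d i) := by
        refine Finset.sum_le_sum fun i _ => ?_
        rw [Matrix.mul_apply]
        refine (abs_sum_mul_le (fun j => R i j) (fun j => C j i)).trans ?_
        rw [hrow i]
        have hb : Real.sqrt (∑ j, ‖C j i‖ ^ 2) ≤ 1 := by
          rw [show (1:ℝ) = Real.sqrt 1 by simp]
          exact Real.sqrt_le_sqrt (by simpa using hcol i)
        calc Real.sqrt (d i) * Real.sqrt (∑ j, ‖C j i‖ ^ 2)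
            ≤ Real.sqrt (d i) * 1 :=
              mul_le_mul_of_nonneg_left hb (Real.sqrt_nonneg _)
          _ = Real.sqrt (d i) := mul_one _
    _ = traceNorm X := (traceNorm_eq_of_spectral hd hV2 hXV).symm

lemma traceNorm_add_le (A B : Matrix n n ℂ) :
    traceNorm (A + B) ≤ traceNorm A + traceNorm B := by
  obtain ⟨W, hW, hEq⟩ := exists_contraction (A + B)
  rw [← hEq, mul_add, trace_add, Complex.add_re]
  exact add_le_add (re_trace_mul_le W hW A) (re_trace_mul_le W hW B)

lemma traceNorm_sum_le {κ : Type*} (s : Finset κ) (f : κ → Matrix n n ℂ) :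
    traceNorm (∑ i ∈ s, f i) ≤ ∑ i ∈ s, traceNorm (f i) := by
  classical
  induction s using Finset.induction_on with
  | empty => simp [traceNorm_zero]
  | insert _ _ ha ih =>
    rw [Finset.sum_insert ha, Finset.sum_insert ha]
    exact (traceNorm_add_le _ _).trans (add_le_add_right ih _)

lemma traceNorm_real_smul (c : ℝ) (hc : 0 ≤ c) (X : Matrix n n ℂ) :
    traceNorm ((c : ℂ) • X) = c * traceNorm X := by
  have hX := posSemidef_self_mul_conjTranspose X
  have hQpsd := hX.posSemidef_sqrt
  have hSpsd : ((c : ℂ) • hX.sqrt).PosSemidef := by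
    exact hQpsd.smul (Complex.zero_le_real.mpr hc)
  have hsq : ((c : ℂ) • hX.sqrt) * ((c : ℂ) • hX.sqrt) = ((c : ℂ) • X) * ((c : ℂ) • X)ᴴ := by
    rw [conjTranspose_smul, Complex.star_def, Complex.conj_ofReal]
    simp only [smul_mul_assoc, mul_smul_comm, smul_smul, hX.sqrt_mul_self]
  rw [traceNorm_eq_re_trace hSpsd hsq, trace_smul, smul_eq_mul, Complex.mul_re,
    Complex.ofReal_re, Complex.ofReal_im, zero_mul, sub_zero]
  rw [traceNorm_eq_re_trace hQpsd hX.sqrt_mul_self]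

lemma traceNorm_conj {U : Matrix n n ℂ} (hU1 : U * Uᴴ = 1) (hU2 : Uᴴ * U = 1)
    (X : Matrix n n ℂ) : traceNorm (U * X * Uᴴ) = traceNorm X := by
  have hX := posSemidef_self_mul_conjTranspose X
  have hS : (U * hX.sqrt * Uᴴ).PosSemidef := hX.posSemidef_sqrt.mul_mul_conjTranspose_same U
  have hsq : (U * hX.sqrt * Uᴴ) * (U * hX.sqrt * Uᴴ) = (U * X * Uᴴ) * (U * X * Uᴴ)ᴴ := by
    rw [conj_mul_conj hU2, hX.sqrt_mul_self]
    have h1 : (U * X * Uᴴ)ᴴ = U * Xᴴ * Uᴴ := by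
      simp only [conjTranspose_mul, conjTranspose_conjTranspose, Matrix.mul_assoc]
    rw [h1, conj_mul_conj hU2]
  rw [traceNorm_eq_re_trace hS hsq, trace_mul_cycle, hU2, one_mul]
  exact (traceNorm_eq_re_trace hX.posSemidef_sqrt hX.sqrt_mul_self).symm

/-! ### Averaging over signed unitaries -/

lemma expand_conj {κ : Type*} [Fintype κ] (Q : κ → Matrix n n ℂ) (X : Matrix n n ℂ)
    (ε : κ → Bool) :
    (∑ j, sgn (ε j) • Q j) * X * (∑ k, sgn (ε k) • Q k)
      = ∑ j, ∑ k, (sgn (ε j) * sgn (ε k)) • (Q j * X * Q k) := by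
  simp only [Finset.sum_mul, Finset.mul_sum, smul_mul_assoc, mul_smul_comm, smul_smul,
    Matrix.mul_assoc, Finset.smul_sum]
  rw [Finset.sum_comm]
  refine Finset.sum_congr rfl fun j _ => Finset.sum_congr rfl fun k _ => ?_
  rw [mul_comm]

lemma sum_conj_eq {κ : Type*} [Fintype κ] [DecidableEq κ] (Q : κ → Matrix n n ℂ)
    (X : Matrix n n ℂ) :
    ∑ ε : κ → Bool, (∑ j, sgn (ε j) • Q j) * X * (∑ k, sgn (ε k) • Q k)
      = ((2:ℂ) ^ Fintype.card κ) • ∑ j, Q j * X * Q j := by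
  calc ∑ ε : κ → Bool, (∑ j, sgn (ε j) • Q j) * X * (∑ k, sgn (ε k) • Q k)
      = ∑ ε : κ → Bool, ∑ j, ∑ k, (sgn (ε j) * sgn (ε k)) • (Q j * X * Q k) := by
        simp only [expand_conj]
    _ = ∑ j, ∑ k, (∑ ε : κ → Bool, sgn (ε j) * sgn (ε k)) • (Q j * X * Q k) := by
        rw [Finset.sum_comm]
        refine Finset.sum_congr rfl fun j _ => ?_
        rw [Finset.sum_comm]
        refine Finset.sum_congr rfl fun k _ => ?_
        rw [Finset.sum_smul]
    _ = ∑ j, (∑ ε : κ → Bool, sgn (ε j) * sgn (ε j)) • (Q j * X * Q j) :=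
        diag_double_sum _ (fun j k h => by rw [sum_sgn_mul h, zero_smul])
    _ = ((2:ℂ) ^ Fintype.card κ) • ∑ j, Q j * X * Q j := by
        rw [Finset.smul_sum]
        exact Finset.sum_congr rfl fun j _ => by rw [sum_sgn_sq]

end TraceNormAux

open TraceNormAux in
/-- The pinching inequality for the trace norm: for pairwise orthogonal
projections `Π k` with `∑ k, Π k ≤ 1`, the pinched matrix has smaller trace
norm, and its trace norm is the sum of the trace norms of the blocks. -/
theorem traceNorm_pinching {n ι : Type*} [Fintype n] [DecidableEq n]
    [Fintype ι]
    (P : ι → Matrix n n ℂ)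
    (hSA : ∀ k, (P k)ᴴ = P k)
    (hIdem : ∀ k, P k * P k = P k)
    (hOrth : ∀ j k, j ≠ k → P j * P k = 0)
    (hLe : (1 - ∑ k, P k).PosSemidef)
    (X : Matrix n n ℂ) :
    traceNorm (∑ k, P k * X * P k) ≤ traceNorm X ∧
    traceNorm (∑ k, P k * X * P k) = ∑ k, traceNorm (P k * X * P k) := by
  classical
  -- Part 2 : additivity over the orthogonal blocks
  have hB1 : ∀ j k : ι, j ≠ k → (P j * X * P j) * (P k * X * P k)ᴴ = 0 := by
    intro j k hjk
    simp only [conjTranspose_mul, hSA, Matrix.mul_assoc]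
    rw [← Matrix.mul_assoc (P j) (P k) (Xᴴ * P k), hOrth j k hjk, Matrix.zero_mul,
      Matrix.mul_zero, Matrix.mul_zero]
  have hB2 : ∀ j k : ι, j ≠ k → (P j * X * P j)ᴴ * (P k * X * P k) = 0 := by
    intro j k hjk
    simp only [conjTranspose_mul, hSA, Matrix.mul_assoc]
    rw [← Matrix.mul_assoc (P j) (P k) (X * P k), hOrth j k hjk, Matrix.zero_mul,
      Matrix.mul_zero, Matrix.mul_zero]
  have part2 := traceNorm_sum_orth (fun k => P k * X * P k) hB1 hB2
  refine ⟨?_, part2⟩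
  -- The completed family of projections, indexed by `Option ι`
  set S : Matrix n n ℂ := ∑ k, P k with hS
  have hSP : ∀ k, S * P k = P k := by
    intro k
    rw [hS, Finset.sum_mul,
      Finset.sum_eq_single k (fun j _ hj => hOrth j k hj) (by simp)]
    exact hIdem k
  have hPS : ∀ k, P k * S = P k := by
    intro k
    rw [hS, Finset.mul_sum,
      Finset.sum_eq_single k (fun j _ hj => hOrth k j (Ne.symm hj)) (by simp)]
    exact hIdem k
  have hSS : S * S = S := by
    conv_lhs => rw [hS, Finset.sum_mul]
    rw [Finset.sum_congr rfl (fun k _ => hPS k), hS]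
  have hSH : Sᴴ = S := by
    rw [hS, conjTranspose_sum]
    exact Finset.sum_congr rfl fun k _ => hSA k
  set Q : Option ι → Matrix n n ℂ := fun o => Option.elim o (1 - S) P with hQ
  have hQSA : ∀ o, (Q o)ᴴ = Q o := by
    intro o
    cases o with
    | none => show (1 - S)ᴴ = 1 - S; rw [conjTranspose_sub, conjTranspose_one, hSH]
    | some k => exact hSA k
  have hQidem : ∀ o, Q o * Q o = Q o := by
    intro o
    cases o with
    | none =>
      show (1 - S) * (1 - S) = 1 - S
      rw [mul_sub, mul_one, sub_mul, one_mul, hSS, sub_self, sub_zero]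
    | some k => exact hIdem k
  have hQorth : ∀ o o', o ≠ o' → Q o * Q o' = 0 := by
    intro o o' hoo
    cases o with
    | none =>
      cases o' with
      | none => exact absurd rfl hoo
      | some k =>
        show (1 - S) * P k = 0
        rw [sub_mul, one_mul, hSP, sub_self]
    | some j =>
      cases o' with
      | none =>
        show P j * (1 - S) = 0
        rw [mul_sub, mul_one, hPS, sub_self]
      | some k => exact hOrth j k (fun h => hoo (by rw [h]))
  have hQsum : ∑ o, Q o = 1 := by
    rw [Fintype.sum_option]
    show (1 - S) + ∑ k, P k = 1
    rw [← hS, sub_add_cancel]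
  -- Part 2 for the completed family
  have hQB1 : ∀ o o' : Option ι, o ≠ o' → (Q o * X * Q o) * (Q o' * X * Q o')ᴴ = 0 := by
    intro o o' hoo
    simp only [conjTranspose_mul, hQSA, Matrix.mul_assoc]
    rw [← Matrix.mul_assoc (Q o) (Q o') (Xᴴ * Q o'), hQorth o o' hoo, Matrix.zero_mul,
      Matrix.mul_zero, Matrix.mul_zero]
  have hQB2 : ∀ o o' : Option ι, o ≠ o' → (Q o * X * Q o)ᴴ * (Q o' * X * Q o') = 0 := by
    intro o o' hoo
    simp only [conjTranspose_mul, hQSA, Matrix.mul_assoc]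
    rw [← Matrix.mul_assoc (Q o) (Q o') (X * Q o'), hQorth o o' hoo, Matrix.zero_mul,
      Matrix.mul_zero, Matrix.mul_zero]
  have part2Q := traceNorm_sum_orth (fun o => Q o * X * Q o) hQB1 hQB2
  -- Averaging over signed unitaries
  have hUconj : ∀ ε : Option ι → Bool,
      traceNorm ((∑ j, sgn (ε j) • Q j) * X * (∑ k, sgn (ε k) • Q k)) = traceNorm X := by
    intro ε
    set U : Matrix n n ℂ := ∑ j, sgn (ε j) • Q j with hU
    have hUH : Uᴴ = U := by
      rw [hU, conjTranspose_sum]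
      exact Finset.sum_congr rfl fun j _ => by
        rw [conjTranspose_smul, star_sgn, hQSA]
    have hUU : U * U = 1 := by
      have h2 := expand_conj Q 1 ε
      simp only [Matrix.mul_one, Matrix.one_mul] at h2
      rw [hU, h2, diag_double_sum _ (fun j k h => by rw [hQorth j k h, smul_zero])]
      calc ∑ j, (sgn (ε j) * sgn (ε j)) • (Q j * Q j)
          = ∑ j, Q j := Finset.sum_congr rfl fun j _ => by
            rw [sgn_mul_self, one_smul, hQidem]
        _ = 1 := hQsum
    have hfin := traceNorm_conj (U := U) (by rw [hUH]; exact hUU) (by rw [hUH]; exact hUU) X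
    rw [hUH] at hfin
    exact hfin
  have havg : traceNorm (((2:ℂ) ^ Fintype.card (Option ι)) • ∑ o, Q o * X * Q o)
      ≤ ((2:ℝ) ^ Fintype.card (Option ι)) * traceNorm X := by
    rw [← sum_conj_eq Q X]
    refine (traceNorm_sum_le Finset.univ _).trans ?_
    rw [Finset.sum_congr rfl (fun ε _ => hUconj ε), Finset.sum_const, Finset.card_univ,
      Fintype.card_fun, Fintype.card_bool, nsmul_eq_mul]
    push_cast
    exact le_refl _
  have hcast : ((2:ℂ) ^ Fintype.card (Option ι))
      = (((2:ℝ) ^ Fintype.card (Option ι) : ℝ) : ℂ) := by push_cast; ring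
  rw [hcast, traceNorm_real_smul _ (by positivity)] at havg
  have hpow : (0:ℝ) < 2 ^ Fintype.card (Option ι) := by positivity
  have hQle : traceNorm (∑ o, Q o * X * Q o) ≤ traceNorm X :=
    le_of_mul_le_mul_left havg hpow
  rw [part2]
  calc ∑ k, traceNorm (P k * X * P k)
      ≤ traceNorm (Q none * X * Q none) + ∑ k, traceNorm (P k * X * P k) :=
        le_add_of_nonneg_left (traceNorm_nonneg _)
    _ = ∑ o, traceNorm (Q o * X * Q o) := by
        rw [Fintype.sum_option]
        rfl
    _ = traceNorm (∑ o, Q o * X * Q o) := part2Q.symm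
    _ ≤ traceNorm X := hQle
end

section
/- Let φ = (1+√5)/2 and define E(p) = ln( (1/φ)·( |p + (1−p)·e^{i3π/5}| + |pφ − (1−p)·e^{i3π/5}| ) ) for p ∈ [0,1]. Then E(1) = ln φ, E(0) = ln(2/φ), and E(p) = 0 if and only if p = 1/φ² (equivalently p = d_I/(d_τ²) with d_τ = φ). -/
open Real Complex

private lemma cos_three_pi_div_five : Real.cos (3 * π / 5) = (1 - Real.sqrt 5) / 4 := by
  have h1 : 3 * π / 5 = π - 2 * (π / 5) := by ring
  rw [h1, Real.cos_pi_sub, Real.cos_two_mul, Real.cos_pi_div_five]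
  have h5 : Real.sqrt 5 ^ 2 = 5 := Real.sq_sqrt (by norm_num)
  nlinarith [h5]

private lemma abs_aux (a b : ℝ) :
    ‖((a : ℂ) + (b : ℂ) * Complex.exp ((3 * (π : ℂ) / 5) * Complex.I))‖ =
      Real.sqrt (a ^ 2 + b ^ 2 + 2 * a * b * ((1 - Real.sqrt 5) / 4)) := by
  have h1 : (3 * (π : ℂ) / 5) = ((3 * π / 5 : ℝ) : ℂ) := by push_cast; ring
  have h2 : Complex.exp (((3 * π / 5 : ℝ) : ℂ) * Complex.I)
      = ((Real.cos (3 * π / 5) : ℝ) : ℂ) + ((Real.sin (3 * π / 5) : ℝ) : ℂ) * Complex.I := by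
    rw [Complex.exp_mul_I, ← Complex.ofReal_cos, ← Complex.ofReal_sin]
  have h3 : (a : ℂ) + (b : ℂ) * (((Real.cos (3 * π / 5) : ℝ) : ℂ)
        + ((Real.sin (3 * π / 5) : ℝ) : ℂ) * Complex.I)
      = ((a + b * Real.cos (3 * π / 5) : ℝ) : ℂ)
        + ((b * Real.sin (3 * π / 5) : ℝ) : ℂ) * Complex.I := by
    push_cast; ring
  rw [h1, h2, h3, Complex.norm_def, Complex.normSq_add_mul_I]
  congr 1
  have hpyth := Real.sin_sq_add_cos_sq (3 * π / 5)
  rw [cos_three_pi_div_five] at hpyth ⊢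
  nlinarith [hpyth]

/-- Anyonic logarithmic negativity of the Fibonacci dimer: with
`φ = (1+√5)/2` and
`E(p) = ln((1/φ)(|p + (1−p)e^{i3π/5}| + |pφ − (1−p)e^{i3π/5}|))`,
we have `E(1) = ln φ`, `E(0) = ln(2/φ)`, and for `p ∈ [0,1]`,
`E(p) = 0` iff `p = 1/φ²`. -/
theorem fibonacci_dimer_negativity
    (φ : ℝ) (hφ : φ = (1 + Real.sqrt 5) / 2)
    (E : ℝ → ℝ)
    (hE : ∀ p, E p = Real.log ((1 / φ) *
      (‖((p : ℂ) + ((1 - p : ℝ) : ℂ) * Complex.exp ((3 * π / 5) * Complex.I))‖ +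
       ‖((p : ℂ) * (φ : ℂ) - ((1 - p : ℝ) : ℂ) * Complex.exp ((3 * π / 5) * Complex.I))‖))) :
    E 1 = Real.log φ ∧ E 0 = Real.log (2 / φ) ∧
    (∀ p, 0 ≤ p → p ≤ 1 → (E p = 0 ↔ p = 1 / φ ^ 2)) := by
  set s : ℝ := Real.sqrt 5 with hs_def
  have hs : s ^ 2 = 5 := Real.sq_sqrt (by norm_num)
  have hs0 : 0 ≤ s := Real.sqrt_nonneg 5
  have hs2 : 2 < s := by nlinarith
  have hs3 : s < 3 := by nlinarith
  have hφ0 : 0 < φ := by rw [hφ]; linarith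
  -- rewrite E in terms of real square roots
  set f : ℝ → ℝ := fun p => p ^ 2 + (1 - p) ^ 2 + 2 * p * (1 - p) * ((1 - s) / 4) with hf_def
  set g : ℝ → ℝ := fun p =>
    (p * φ) ^ 2 + (1 - p) ^ 2 + 2 * (p * φ) * (-(1 - p)) * ((1 - s) / 4) with hg_def
  have hE' : ∀ p : ℝ, E p = Real.log ((1 / φ) * (Real.sqrt (f p) + Real.sqrt (g p))) := by
    intro p
    have harg : (p : ℂ) * (φ : ℂ) - ((1 - p : ℝ) : ℂ) * Complex.exp ((3 * π / 5) * Complex.I)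
        = ((p * φ : ℝ) : ℂ) + ((-(1 - p) : ℝ) : ℂ) * Complex.exp ((3 * (π : ℂ) / 5) * Complex.I) := by
      push_cast; ring
    rw [hE p, harg, abs_aux, abs_aux]
    simp only [hf_def, hg_def]
    rw [hs_def]
    ring_nf
  -- positivity facts on [0,1]
  have hfpos : ∀ p : ℝ, 0 ≤ p → p ≤ 1 → 0 ≤ f p := by
    intro p hp hp1
    simp only [hf_def]
    nlinarith [sq_nonneg (p - (1 - p)), mul_nonneg hp (by linarith : (0:ℝ) ≤ 1 - p)]
  have hgpos : ∀ p : ℝ, 0 ≤ p → p ≤ 1 → 0 < g p := by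
    intro p hp hp1
    simp only [hg_def]
    have h3 : 0 ≤ 2 * (p * φ) * (-(1 - p)) * ((1 - s) / 4) := by
      have : 2 * (p * φ) * (-(1 - p)) * ((1 - s) / 4)
          = (p * φ) * (1 - p) * ((s - 1) / 2) := by ring
      rw [this]
      have := mul_nonneg (mul_nonneg hp hφ0.le) (by linarith : (0:ℝ) ≤ 1 - p)
      nlinarith
    rcases eq_or_ne p 1 with h | h
    · subst h; nlinarith
    · have hp1' : p < 1 := lt_of_le_of_ne hp1 h
      nlinarith [sq_nonneg (p * φ), sq_nonneg (1 - p)]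
  -- key algebraic facts
  have hphisq : φ ^ 2 = φ + 1 := by rw [hφ]; linear_combination (1/4 : ℝ) * hs
  refine ⟨?_, ?_, ?_⟩
  · -- E 1 = log φ
    rw [hE' 1]
    have hf1 : f 1 = 1 := by simp [hf_def]
    have hg1 : g 1 = φ ^ 2 := by simp [hg_def]
    rw [hf1, hg1, Real.sqrt_one, show φ ^ 2 = φ * φ by ring, Real.sqrt_mul_self hφ0.le]
    congr 1
    field_simp
    linarith [hphisq]
  · -- E 0 = log (2/φ)
    rw [hE' 0]
    have hf0 : f 0 = 1 := by simp [hf_def]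
    have hg0 : g 0 = 1 := by simp [hg_def]
    rw [hf0, hg0, Real.sqrt_one, show (1:ℝ)/φ * (1+1) = 2/φ by ring]
  · -- the iff
    intro p hp hp1
    have hfp := hfpos p hp hp1
    have hgp := hgpos p hp hp1
    have hxpos : 0 < (1 / φ) * (Real.sqrt (f p) + Real.sqrt (g p)) := by
      have h1 : 0 < Real.sqrt (g p) := Real.sqrt_pos.mpr hgp
      have h2 : 0 ≤ Real.sqrt (f p) := Real.sqrt_nonneg _
      positivity
    have hinv : 1 / φ ^ 2 = (3 - s) / 2 := by
      rw [div_eq_iff (by positivity : (φ:ℝ) ^ 2 ≠ 0), hφ]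
      linear_combination ((s - 1) / 8) * hs
    have step1 : E p = 0 ↔ (1 / φ) * (Real.sqrt (f p) + Real.sqrt (g p)) = 1 := by
      rw [hE' p]
      constructor
      · intro h
        rcases Real.log_eq_zero.mp h with h | h | h
        · exact absurd h (ne_of_gt hxpos)
        · exact h
        · exact absurd h (by nlinarith)
      · intro h; rw [h, Real.log_one]
    have step2 : (1 / φ) * (Real.sqrt (f p) + Real.sqrt (g p)) = 1 ↔
        Real.sqrt (f p) + Real.sqrt (g p) = φ := by
      rw [one_div, inv_mul_eq_div, div_eq_one_iff_eq (ne_of_gt hφ0)]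
    rw [step1, step2, hinv]
    constructor
    · -- forward: sum of roots = φ implies p = (3-s)/2
      intro h
      set u := Real.sqrt (f p) with hu_def
      set v := Real.sqrt (g p) with hv_def
      have hu : u ^ 2 = f p := Real.sq_sqrt hfp
      have hv : v ^ 2 = g p := Real.sq_sqrt hgp.le
      have huv : u = φ - v := by linarith
      have hf2 : f p = (φ - v) ^ 2 := by rw [← hu, huv]
      have h2 : 2 * φ * v = φ ^ 2 + g p - f p := by linear_combination hf2 + hv
      have key : 4 * φ ^ 2 * g p = (φ ^ 2 + g p - f p) ^ 2 := by
        rw [← h2]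
        linear_combination (-4 * φ ^ 2) * hv
      rw [hφ] at key
      simp only [hf_def, hg_def, hφ] at key
      have h0 : (25 + 11 * s) * (p - (3 - s) / 2) ^ 2 = 0 := by
        linear_combination 2 * key +
          (-(87:ℝ)/8 + 57/4 * p - 37/8 * p^2 + 13/4 * s - 1/2 * p^2 * s
            + 1/8 * s^2 - 1/4 * p * s^2 + 1/8 * p^2 * s^2) * hs
      have h25 : (0:ℝ) < 25 + 11 * s := by linarith
      have hsq0 : (p - (3 - s) / 2) ^ 2 = 0 := by
        rcases mul_eq_zero.mp h0 with h | h
        · linarith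
        · exact h
      have := pow_eq_zero_iff (n := 2) (by norm_num) |>.mp hsq0
      linarith [this]
    · -- backward: p = (3-s)/2 gives sum of roots = φ
      intro hpe
      subst hpe
      have hfval : f ((3 - s) / 2) = ((s - 1) / 2) ^ 2 := by
        simp only [hf_def]
        linear_combination ((s - 3) / 8) * hs
      have hgval : g ((3 - s) / 2) = 1 := by
        simp only [hg_def, hφ]
        ring
      rw [hfval, hgval, Real.sqrt_one,
        Real.sqrt_sq (by linarith : (0:ℝ) ≤ (s - 1) / 2), hφ]
      ring
end

section
/- For the su(2)₄ spin-1 dimer, define E(p₀,p₁) = ln( (1/2)·Σ_{s=±1} |p₀ − p₂ + s·e^{−iπ/3}·p₁| + |p₀ + p₂| ) where p₂ = 1 − p₀ − p₁ and p₀,p₁,p₂ ≥ 0. Then E(p₀,p₁) = 0 if and only if p₀ = p₂ (equivalently p₁ = 1 − 2p₀), and E ≥ 0 throughout the simplex. -/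
open Real Complex

lemma su24_exp_val : Complex.exp (-(π / 3) * Complex.I)
    = (1/2 : ℂ) - (Real.sqrt 3 / 2 : ℝ) * Complex.I := by
  rw [Complex.exp_mul_I, Complex.cos_neg, Complex.sin_neg]
  have h : (π / 3 : ℂ) = ((π/3 : ℝ) : ℂ) := by push_cast; ring
  rw [h, ← Complex.ofReal_cos, ← Complex.ofReal_sin,
    Real.cos_pi_div_three, Real.sin_pi_div_three]
  push_cast
  ring

lemma su24_abs_add (a b : ℝ) :
    ‖(a:ℂ) + ((1/2 : ℂ) - (Real.sqrt 3 / 2 : ℝ) * Complex.I) * b‖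
      = Real.sqrt (a^2 + a*b + b^2) := by
  rw [Complex.norm_def, Complex.normSq_apply]
  simp
  congr 1
  have h3 : Real.sqrt 3 ^ 2 = 3 := Real.sq_sqrt (by norm_num)
  ring_nf
  nlinarith [h3]

lemma su24_abs_sub (a b : ℝ) :
    ‖(a:ℂ) - ((1/2 : ℂ) - (Real.sqrt 3 / 2 : ℝ) * Complex.I) * b‖
      = Real.sqrt (a^2 - a*b + b^2) := by
  rw [Complex.norm_def, Complex.normSq_apply]
  simp
  congr 1
  have h3 : Real.sqrt 3 ^ 2 = 3 := Real.sq_sqrt (by norm_num)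
  ring_nf
  nlinarith [h3]

lemma su24_sqrt_ge (a b : ℝ) : |b + a/2| ≤ Real.sqrt (a^2 + a*b + b^2) := by
  rw [← Real.sqrt_sq_eq_abs]
  exact Real.sqrt_le_sqrt (by nlinarith [sq_nonneg a])

lemma su24_sqrt_ge' (a b : ℝ) : |b - a/2| ≤ Real.sqrt (a^2 - a*b + b^2) := by
  rw [← Real.sqrt_sq_eq_abs]
  exact Real.sqrt_le_sqrt (by nlinarith [sq_nonneg a])

lemma su24_sqrt_gt (a b : ℝ) (ha : a ≠ 0) : |b + a/2| < Real.sqrt (a^2 + a*b + b^2) := by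
  rw [← Real.sqrt_sq_eq_abs]
  exact Real.sqrt_lt_sqrt (sq_nonneg _) (by nlinarith [sq_pos_of_ne_zero ha])

/-- Anyonic logarithmic negativity of the su(2)₄ spin-1 dimer:
`E(p₀,p₁) = ln((1/2)·∑_{s=±1}|p₀−p₂+s·e^{−iπ/3}p₁| + |p₀+p₂|)` with
`p₂ = 1−p₀−p₁`; it is nonnegative on the simplex and vanishes iff `p₀ = p₂`. -/
theorem su2_4_spin1_dimer_negativity
    (E : ℝ → ℝ → ℝ)
    (hE : ∀ p₀ p₁, E p₀ p₁ = Real.log ((1 / 2) *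
      (‖((p₀ - (1 - p₀ - p₁) : ℝ) : ℂ) +
          Complex.exp (-(π / 3) * Complex.I) * (p₁ : ℂ)‖ +
       ‖((p₀ - (1 - p₀ - p₁) : ℝ) : ℂ) -
          Complex.exp (-(π / 3) * Complex.I) * (p₁ : ℂ)‖) +
      |p₀ + (1 - p₀ - p₁)|)) :
    ∀ p₀ p₁, 0 ≤ p₀ → 0 ≤ p₁ → 0 ≤ 1 - p₀ - p₁ →
      0 ≤ E p₀ p₁ ∧ (E p₀ p₁ = 0 ↔ p₀ = 1 - p₀ - p₁) := by
  intro p₀ p₁ h0 h1 h2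
  set a : ℝ := p₀ - (1 - p₀ - p₁) with ha
  set b : ℝ := p₁ with hb
  have habs : |p₀ + (1 - p₀ - p₁)| = 1 - b := by
    rw [_root_.abs_of_nonneg (by linarith)]; ring
  have hS : E p₀ p₁ = Real.log ((1/2) *
      (Real.sqrt (a^2 + a*b + b^2) + Real.sqrt (a^2 - a*b + b^2)) + (1 - b)) := by
    rw [hE, su24_exp_val, su24_abs_add, su24_abs_sub, habs]
  set S : ℝ := (1/2) * (Real.sqrt (a^2 + a*b + b^2) + Real.sqrt (a^2 - a*b + b^2)) + (1 - b)
    with hSdef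
  have hsum : 2 * b ≤ |b + a/2| + |b - a/2| := by
    have := abs_add_le (b + a/2) (b - a/2)
    have h2b : |b + a/2 + (b - a/2)| = 2 * b := by
      rw [show b + a/2 + (b - a/2) = 2*b by ring, _root_.abs_of_nonneg (by linarith)]
    linarith [this, h2b.ge]
  have hS1 : 1 ≤ S := by
    have g1 := su24_sqrt_ge a b
    have g2 := su24_sqrt_ge' a b
    rw [hSdef]; linarith
  constructor
  · rw [hS]; exact Real.log_nonneg hS1
  constructor
  · intro hz
    by_contra hne
    have hane : a ≠ 0 := by
      intro h; apply hne; have : p₀ - (1 - p₀ - p₁) = 0 := h; linarith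
    have hSgt : 1 < S := by
      have g1 := su24_sqrt_gt a b hane
      have g2 := su24_sqrt_ge' a b
      rw [hSdef]; linarith
    have : 0 < E p₀ p₁ := by rw [hS]; exact Real.log_pos hSgt
    linarith
  · intro hp
    have ha0 : a = 0 := by rw [ha]; linarith
    have : S = 1 := by
      rw [hSdef, ha0]
      have : Real.sqrt (0^2 + 0*b + b^2) = b := by
        rw [show (0:ℝ)^2 + 0*b + b^2 = b^2 by ring, Real.sqrt_sq h1]
      have h2' : Real.sqrt (0^2 - 0*b + b^2) = b := by
        rw [show (0:ℝ)^2 - 0*b + b^2 = b^2 by ring, Real.sqrt_sq h1]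
      rw [this, h2']; ring
    rw [hS, this, Real.log_one]
end
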